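/- For every 2-coloring of the group ℤ² there exists an infinite monochromatic subset A ⊆ ℤ² that is symmetric, i.e., A = 2x - A for some point x ∈ ℤ². -/

import Mathlib

private lemma fin2_eq_of_ne {a b c : Fin 2} (h1 : a ≠ b) (h2 : c ≠ b) : a = c := by
  fin_cases a <;> fin_cases b <;> fin_cases c <;> simp_all

private lemma fin2_cases (v : Fin 2) : v = 0 ∨ v = 1 := by
  fin_cases v <;> simp

/-- For every 2-coloring of ℤ² there exists an infinite monochromatic symmetric subset. -/
theorem stmt_0 (χ : ℤ × ℤ → Fin 2) :
    ∃ A : Set (ℤ × ℤ), A.Infinite ∧ (∃ c, ∀ a ∈ A, χ a = c) ∧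
      (∃ x : ℤ × ℤ, A = (fun a => 2 • x - a) '' A) := by
  by_cases hcase : ∃ x : ℤ × ℤ, {g : ℤ × ℤ | χ (2 • x - g) = χ g}.Infinite
  · -- Case 1: some center has infinitely many monochromatic symmetric pairs
    obtain ⟨x, hinf⟩ := hcase
    have hpig : ∃ c, {g : ℤ × ℤ | χ (2 • x - g) = χ g ∧ χ g = c}.Infinite := by
      by_contra hc
      push_neg at hc
      have h0 := hc 0
      have h1 := hc 1
      refine hinf ((h0.union h1).subset ?_)
      intro g hg
      rcases fin2_cases (χ g) with h | h
      · exact Or.inl ⟨hg, h⟩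
      · exact Or.inr ⟨hg, h⟩
    obtain ⟨c, hc⟩ := hpig
    refine ⟨{g : ℤ × ℤ | χ (2 • x - g) = χ g ∧ χ g = c}, hc, ⟨c, fun a ha => ha.2⟩, x, ?_⟩
    ext a
    simp only [Set.mem_setOf_eq, Set.mem_image]
    constructor
    · intro ⟨ha1, ha2⟩
      refine ⟨2 • x - a, ⟨?_, ?_⟩, sub_sub_cancel _ _⟩
      · rw [sub_sub_cancel]; exact ha1.symm
      · rw [ha1]; exact ha2
    · rintro ⟨b, ⟨hb1, hb2⟩, rfl⟩
      rw [sub_sub_cancel]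
      exact ⟨hb1.symm, hb1.trans hb2⟩
  · -- Case 2: contradiction
    exfalso
    push_neg at hcase
    try simp only [Set.not_infinite] at hcase
    set B : ℤ × ℤ → Set (ℤ × ℤ) := fun x => {g : ℤ × ℤ | χ (2 • x - g) = χ g} with hBdef
    have hB : ∀ x, (B x).Finite := hcase
    -- almost periodicity
    have hper : ∀ t g : ℤ × ℤ, g ∉ B 0 → -g ∉ B t → χ (g + 2 • t) = χ g := by
      intro t g h0 ht
      have h0' : χ (-g) ≠ χ g := by
        simpa [hBdef] using h0
      have ht' : χ (2 • t + g) ≠ χ (-g) := by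
        simpa [hBdef, sub_neg_eq_add] using ht
      have := fin2_eq_of_ne ht' h0'.symm
      rwa [add_comm] at this
    set D : Set (ℤ × ℤ) :=
      B 0 ∪ (Neg.neg '' B ((1 : ℤ), (0 : ℤ))) ∪ (Neg.neg '' B ((0 : ℤ), (1 : ℤ))) with hDdef
    have hD : D.Finite := (((hB 0).union ((hB _).image _)).union ((hB _).image _))
    set N : ℕ := hD.toFinset.sup (fun d => max d.1.natAbs d.2.natAbs) with hNdef
    have hN : ∀ d ∈ D, d.1.natAbs ≤ N ∧ d.2.natAbs ≤ N := by
      intro d hd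
      have h := Finset.le_sup (f := fun d : ℤ × ℤ => max d.1.natAbs d.2.natAbs)
        (hD.mem_toFinset.mpr hd)
      exact ⟨le_trans (le_max_left _ _) h, le_trans (le_max_right _ _) h⟩
    have safe : ∀ g : ℤ × ℤ, (N < g.1.natAbs ∨ N < g.2.natAbs) → g ∉ D := by
      intro g hg hgD
      have := hN g hgD
      omega
    -- horizontal and vertical steps
    have hH : ∀ g : ℤ × ℤ, g ∉ D → χ (g + ((2 : ℤ), (0 : ℤ))) = χ g := by
      intro g hg
      have h0 : g ∉ B 0 := fun h => hg (Or.inl (Or.inl h))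
      have h1 : -g ∉ B ((1 : ℤ), (0 : ℤ)) := by
        intro h
        exact hg (Or.inl (Or.inr ⟨-g, h, neg_neg g⟩))
      have := hper ((1 : ℤ), (0 : ℤ)) g h0 h1
      simpa using this
    have hV : ∀ g : ℤ × ℤ, g ∉ D → χ (g + ((0 : ℤ), (2 : ℤ))) = χ g := by
      intro g hg
      have h0 : g ∉ B 0 := fun h => hg (Or.inl (Or.inl h))
      have h1 : -g ∉ B ((0 : ℤ), (1 : ℤ)) := by
        intro h
        exact hg (Or.inr ⟨-g, h, neg_neg g⟩)
      have := hper ((0 : ℤ), (1 : ℤ)) g h0 h1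
      simpa using this
    -- vertical induction
    have vert : ∀ x0 : ℤ, N < x0.natAbs → ∀ j : ℕ, χ (x0, 2 * (j : ℤ)) = χ (x0, 0) := by
      intro x0 hx0 j
      induction j with
      | zero => norm_num
      | succ j ih =>
        have hnot : ((x0, 2 * (j : ℤ)) : ℤ × ℤ) ∉ D := safe _ (Or.inl hx0)
        have hstep := hV _ hnot
        have heq : ((x0, 2 * (j : ℤ)) : ℤ × ℤ) + ((0 : ℤ), (2 : ℤ))
            = ((x0, 2 * ((j : ℤ) + 1)) : ℤ × ℤ) := by
          simp [Prod.ext_iff]; ring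
        rw [heq] at hstep
        push_cast
        rw [hstep]; exact ih
    -- horizontal induction
    have horiz : ∀ y0 : ℤ, N < y0.natAbs → ∀ k : ℕ, ∀ a : ℤ,
        χ (a + 2 * (k : ℤ), y0) = χ (a, y0) := by
      intro y0 hy0 k
      induction k with
      | zero => intro a; norm_num
      | succ k ih =>
        intro a
        have hnot : ((a + 2 * (k : ℤ), y0) : ℤ × ℤ) ∉ D := safe _ (Or.inr hy0)
        have hstep := hH _ hnot
        have heq : ((a + 2 * (k : ℤ), y0) : ℤ × ℤ) + ((2 : ℤ), (0 : ℤ))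
            = ((a + 2 * ((k : ℤ) + 1), y0) : ℤ × ℤ) := by
          simp [Prod.ext_iff]; ring
        rw [heq] at hstep
        push_cast
        rw [hstep]; exact ih a
    -- combine
    set K : ℤ := 2 * (N : ℤ) + 2 with hKdef
    have hKabs : N < K.natAbs := by omega
    have hKabs' : N < (-K).natAbs := by omega
    have hy0abs : N < (2 * ((N : ℤ) + 1)).natAbs := by omega
    have c1 : χ (K, 2 * ((N : ℤ) + 1)) = χ (K, 0) := by
      have := vert K hKabs (N + 1)
      push_cast at this
      exact this
    have c3 : χ (-K, 2 * ((N : ℤ) + 1)) = χ (-K, 0) := by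
      have := vert (-K) hKabs' (N + 1)
      push_cast at this
      exact this
    have c2 : χ (K, 2 * ((N : ℤ) + 1)) = χ (-K, 2 * ((N : ℤ) + 1)) := by
      have := horiz (2 * ((N : ℤ) + 1)) hy0abs (2 * N + 2) (-K)
      push_cast at this
      have harg : -K + 2 * (2 * (N : ℤ) + 2) = K := by omega
      rw [harg] at this
      exact this
    have hfinal : χ (-K, 0) = χ (K, 0) := by
      rw [← c3, ← c2, c1]
    -- contradiction with antisymmetry at 0
    have hK0 : ((K, (0 : ℤ)) : ℤ × ℤ) ∉ B 0 := by
      have : ((K, (0 : ℤ)) : ℤ × ℤ) ∉ D := safe _ (Or.inl hKabs)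
      exact fun h => this (Or.inl (Or.inl h))
    have : χ (2 • ((0 : ℤ × ℤ)) - (K, (0 : ℤ))) ≠ χ (K, (0 : ℤ)) := hK0
    apply this
    have : (2 • ((0 : ℤ × ℤ)) - ((K, (0 : ℤ)) : ℤ × ℤ)) = ((-K, (0 : ℤ)) : ℤ × ℤ) := by
      simp
    rw [this]
    exact hfinal
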